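/- arXiv:2506.02978 — 4 statements merged into one kernel-verified Lean document; each statement's English description precedes it below -/
import Mathlib

section
/- Let F : ℝ^d → ℝ be differentiable with L-Lipschitz gradient (L > 0) and F ≥ 0. Let α₀ > 0, β > 0, and let (x_t) be a sequence with x_{t+1} = x_t + η_t·d_t, where the directions satisfy ⟨∇F(x_t), d_t⟩ ≤ −α₀·‖∇F(x_t)‖² and ‖d_t‖ ≤ β·‖∇F(x_t)‖ for all t, and the step sizes satisfy η_t ≥ 0 and η_t → 0. Then there exists t₁ ∈ ℕ such that F(x_{t+1}) ≤ F(x_t) − (α₀/2)·η_t·‖∇F(x_t)‖² for all t ≥ t₁, and consequently the series ∑_{t=0}^∞ η_t·‖∇F(x_t)‖² converges. -/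
open Filter RealInnerProductSpace

open Set in
lemma descent_aux {dim : ℕ} (F : EuclideanSpace ℝ (Fin dim) → ℝ) (L : ℝ) (hL0 : 0 ≤ L)
    (hF : Differentiable ℝ F)
    (hLip : ∀ x y, ‖gradient F x - gradient F y‖ ≤ L * ‖x - y‖)
    (x v : EuclideanSpace ℝ (Fin dim)) :
    F (x + v) ≤ F x + ⟪gradient F x, v⟫ + L * ‖v‖ ^ 2 := by
  set φ := fderiv ℝ F x
  have key : ‖F (x + v) - F x - φ ((x + v) - x)‖ ≤ (L * ‖v‖) * ‖(x + v) - x‖ := by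
    apply Convex.norm_image_sub_le_of_norm_fderiv_le' (s := segment ℝ x (x + v))
      (fun z _ => hF.differentiableAt) ?_ (convex_segment _ _)
      (left_mem_segment _ _ _) (right_mem_segment _ _ _)
    intro z hz
    rcases hz with ⟨a, b, ha, hb, hab, rfl⟩
    have h1 : ‖fderiv ℝ F (a • x + b • (x + v)) - φ‖
        = ‖gradient F (a • x + b • (x + v)) - gradient F x‖ := by
      rw [show gradient F (a • x + b • (x + v)) - gradient F x
          = (InnerProductSpace.toDual ℝ _).symm (fderiv ℝ F (a • x + b • (x + v)) - φ) by
        simp [gradient]; rfl]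
      exact (LinearIsometryEquiv.norm_map _ _).symm
    rw [h1]
    calc ‖gradient F (a • x + b • (x + v)) - gradient F x‖
        ≤ L * ‖a • x + b • (x + v) - x‖ := hLip _ _
      _ = L * (b * ‖v‖) := by
          rw [show a • x + b • (x + v) - x = b • v by
            rw [smul_add]; rw [show a = 1 - b by linarith]; module]
          rw [norm_smul, Real.norm_eq_abs, abs_of_nonneg hb]
      _ ≤ L * ‖v‖ := by
          have hb1 : b ≤ 1 := by linarith
          exact mul_le_mul_of_nonneg_left (mul_le_of_le_one_left (norm_nonneg v) hb1) hL0
  have hφ : φ ((x + v) - x) = ⟪gradient F x, v⟫ := by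
    simp only [add_sub_cancel_left]
    rw [show gradient F x = (InnerProductSpace.toDual ℝ _).symm φ from rfl]
    exact InnerProductSpace.toDual_symm_apply.symm
  have := (abs_le.mp (by rwa [Real.norm_eq_abs] at key)).2
  rw [hφ] at this
  have h2 : ‖x + v - x‖ = ‖v‖ := by rw [add_sub_cancel_left]
  rw [h2] at this
  nlinarith [this]

/-- Per-iterate decrease in terms of the gradient (Lemma 5 of the AICL
convergence analysis): with `F ≥ 0` differentiable with `L`-Lipschitz
gradient, gradient-related directions (`⟪∇F xₜ, dₜ⟫ ≤ -α₀·‖∇F xₜ‖²`,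
`‖dₜ‖ ≤ β·‖∇F xₜ‖`) and step sizes `ηₜ ≥ 0` with `ηₜ → 0`, eventually
`F (x (t+1)) ≤ F (x t) - (α₀/2)·ηₜ·‖∇F xₜ‖²`, and consequently
`∑ ηₜ·‖∇F xₜ‖²` converges. -/
theorem aicl_eventual_gradient_decrease_and_summability
    (dim : ℕ) (F : EuclideanSpace ℝ (Fin dim) → ℝ) (L α₀ β : ℝ)
    (hL : 0 < L) (hα₀ : 0 < α₀) (hβ : 0 < β)
    (hF : Differentiable ℝ F) (hF_nonneg : ∀ x, 0 ≤ F x)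
    (hLip : ∀ x y, ‖gradient F x - gradient F y‖ ≤ L * ‖x - y‖)
    (x : ℕ → EuclideanSpace ℝ (Fin dim))
    (dvec : ℕ → EuclideanSpace ℝ (Fin dim)) (η : ℕ → ℝ)
    (hstep : ∀ t, x (t + 1) = x t + η t • dvec t)
    (hcorr : ∀ t, ⟪gradient F (x t), dvec t⟫ ≤ -α₀ * ‖gradient F (x t)‖ ^ 2)
    (hnorm : ∀ t, ‖dvec t‖ ≤ β * ‖gradient F (x t)‖)
    (hη_nonneg : ∀ t, 0 ≤ η t)
    (hη_lim : Tendsto η atTop (nhds 0)) :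
    (∃ t₁ : ℕ, ∀ t ≥ t₁,
        F (x (t + 1)) ≤ F (x t) - α₀ / 2 * η t * ‖gradient F (x t)‖ ^ 2) ∧
      Summable (fun t => η t * ‖gradient F (x t)‖ ^ 2) := by
  have hthrpos : 0 < α₀ / (2 * L * β ^ 2) := by positivity
  have hev : ∀ᶠ t in atTop, η t < α₀ / (2 * L * β ^ 2) := by
    have := hη_lim.eventually (gt_mem_nhds hthrpos)
    exact this
  obtain ⟨t₁, ht₁⟩ := eventually_atTop.mp hev
  have key : ∀ t ≥ t₁,
      F (x (t + 1)) ≤ F (x t) - α₀ / 2 * η t * ‖gradient F (x t)‖ ^ 2 := by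
    intro t ht
    have hd := descent_aux F L hL.le hF hLip (x t) (η t • dvec t)
    rw [← hstep t] at hd
    set g := ‖gradient F (x t)‖ with hg
    have hgnn : 0 ≤ g := norm_nonneg _
    have hip : ⟪gradient F (x t), η t • dvec t⟫ = η t * ⟪gradient F (x t), dvec t⟫ :=
      real_inner_smul_right _ _ _
    have hns : ‖η t • dvec t‖ ^ 2 = η t ^ 2 * ‖dvec t‖ ^ 2 := by
      rw [norm_smul, mul_pow, Real.norm_eq_abs, sq_abs]
    rw [hip, hns] at hd
    have h1 : η t * ⟪gradient F (x t), dvec t⟫ ≤ η t * (-α₀ * g ^ 2) :=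
      mul_le_mul_of_nonneg_left (hcorr t) (hη_nonneg t)
    have h2 : ‖dvec t‖ ^ 2 ≤ β ^ 2 * g ^ 2 := by
      nlinarith [hnorm t, norm_nonneg (dvec t)]
    have hηlt : η t < α₀ / (2 * L * β ^ 2) := ht₁ t ht
    have h4 : L * β ^ 2 * η t ≤ α₀ / 2 := by
      rw [lt_div_iff₀ (by positivity)] at hηlt
      nlinarith
    have h3 : L * (η t ^ 2 * ‖dvec t‖ ^ 2) ≤ α₀ / 2 * η t * g ^ 2 := by
      have : L * (η t ^ 2 * ‖dvec t‖ ^ 2) ≤ L * (η t ^ 2 * (β ^ 2 * g ^ 2)) := by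
        apply mul_le_mul_of_nonneg_left _ hL.le
        exact mul_le_mul_of_nonneg_left h2 (sq_nonneg _)
      calc L * (η t ^ 2 * ‖dvec t‖ ^ 2) ≤ L * (η t ^ 2 * (β ^ 2 * g ^ 2)) := this
        _ = (L * β ^ 2 * η t) * (η t * g ^ 2) := by ring
        _ ≤ α₀ / 2 * (η t * g ^ 2) := by
            apply mul_le_mul_of_nonneg_right h4
            exact mul_nonneg (hη_nonneg t) (sq_nonneg _)
        _ = α₀ / 2 * η t * g ^ 2 := by ring
    nlinarith
  refine ⟨⟨t₁, key⟩, ?_⟩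
  rw [← summable_nat_add_iff t₁]
  have hnn : ∀ n : ℕ, 0 ≤ η (n + t₁) * ‖gradient F (x (n + t₁))‖ ^ 2 :=
    fun n => mul_nonneg (hη_nonneg _) (sq_nonneg _)
  apply summable_of_sum_range_le hnn (c := 2 / α₀ * F (x t₁))
  intro n
  have tele : ∀ n : ℕ, α₀ / 2 * ∑ i ∈ Finset.range n,
      (η (i + t₁) * ‖gradient F (x (i + t₁))‖ ^ 2) ≤ F (x t₁) - F (x (n + t₁)) := by
    intro n
    induction n with
    | zero => simp
    | succ m ih =>
        have hk := key (m + t₁) (Nat.le_add_left _ _)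
        rw [Finset.sum_range_succ]
        have : x (m + 1 + t₁) = x (m + t₁ + 1) := by ring_nf
        rw [this]
        nlinarith
  have hn := tele n
  have hF0 := hF_nonneg (x (n + t₁))
  have : ∑ i ∈ Finset.range n, (η (i + t₁) * ‖gradient F (x (i + t₁))‖ ^ 2)
      ≤ 2 / α₀ * F (x t₁) := by
    rw [div_mul_eq_mul_div, le_div_iff₀ hα₀]
    nlinarith
  exact this
end

section
/- Let (η_t) be a sequence of nonnegative reals with ∑_{t=0}^∞ η_t = ∞, let (c_t) be a sequence of nonnegative reals with ∑_{t=0}^∞ η_t·c_t² < ∞, and suppose there exists M > 0 such that |c_{t+1} − c_t| ≤ M·η_t·c_t for all t. Then c_t → 0 as t → ∞. -/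
open Filter

/-- Auxiliary fact upgrading the liminf statement to a full limit in Lemma 5
of the AICL convergence analysis: if `η t ≥ 0` with divergent partial sums,
`c t ≥ 0` with `∑ η t * c t ^ 2 < ∞`, and `|c (t+1) - c t| ≤ M * η t * c t`
for some `M > 0`, then `c t → 0`. -/
theorem aicl_gradient_norm_tendsto_zero_aux
    (η c : ℕ → ℝ)
    (hη_nonneg : ∀ t, 0 ≤ η t) (hc_nonneg : ∀ t, 0 ≤ c t)
    (hη_div : Tendsto (fun n : ℕ => ∑ t ∈ Finset.range n, η t) atTop atTop)
    (hsum : Summable (fun t => η t * c t ^ 2))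
    (M : ℝ) (hM : 0 < M)
    (hslow : ∀ t, |c (t + 1) - c t| ≤ M * η t * c t) :
    Tendsto c atTop (nhds 0) := by
  classical
  by_contra hcon
  rw [Metric.tendsto_atTop] at hcon
  push_neg at hcon
  obtain ⟨ε, hε, hfreq⟩ := hcon
  have hfreq' : ∀ N, ∃ n ≥ N, ε ≤ c n := by
    intro N
    obtain ⟨n, hn, hd⟩ := hfreq N
    exact ⟨n, hn, by simpa [Real.dist_eq, abs_of_nonneg (hc_nonneg n)] using hd⟩
  -- liminf is 0
  have hlim : ∀ N, ∃ m ≥ N, c m < ε / 2 := by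
    by_contra h
    push_neg at h
    obtain ⟨N, hN⟩ := h
    have hsum' : Summable (fun t => η (t + N) * c (t + N) ^ 2) :=
      (summable_nat_add_iff (f := fun t => η t * c t ^ 2) N).mpr hsum
    have hbd : ∀ t, η (t + N) ≤ 4 / ε ^ 2 * (η (t + N) * c (t + N) ^ 2) := by
      intro t
      have h1 : ε / 2 ≤ c (t + N) := hN _ (Nat.le_add_left _ _)
      have h2 : ε ^ 2 / 4 ≤ c (t + N) ^ 2 := by nlinarith
      have h3 := mul_le_mul_of_nonneg_left h2 (hη_nonneg (t + N))
      rw [div_mul_eq_mul_div, le_div_iff₀ (by positivity : (0:ℝ) < ε ^ 2)]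
      nlinarith
    have hcomp : Summable (fun t => η (t + N)) :=
      Summable.of_nonneg_of_le (fun t => hη_nonneg _) hbd (hsum'.mul_left (4 / ε ^ 2))
    have hs : Summable η := (summable_nat_add_iff (f := η) N).mp hcomp
    exact not_tendsto_atTop_of_tendsto_nhds hs.hasSum.tendsto_sum_nat hη_div
  -- Cauchy tail bound on partial sums of η c²
  set S : ℕ → ℝ := fun n => ∑ t ∈ Finset.range n, η t * c t ^ 2 with hS
  have hC : CauchySeq S := hsum.hasSum.tendsto_sum_nat.cauchySeq
  rw [Metric.cauchySeq_iff'] at hC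
  obtain ⟨N, hN⟩ := hC (ε ^ 2 / (4 * M)) (by positivity)
  obtain ⟨u, huN, hcu⟩ := hfreq' N
  obtain ⟨m, hm, hcm⟩ := hlim (u + 1)
  have hex : ∃ n, u < n ∧ c n < ε / 2 := ⟨m, lt_of_lt_of_le (Nat.lt_succ_self u) hm, hcm⟩
  set v := Nat.find hex with hv
  obtain ⟨huv, hcv⟩ := Nat.find_spec hex
  have hmid : ∀ t, u ≤ t → t < v → ε / 2 ≤ c t := by
    intro t hut htv
    rcases eq_or_lt_of_le hut with rfl | h
    · linarith
    · by_contra hlt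
      push_neg at hlt
      exact Nat.find_min hex htv ⟨h, hlt⟩
  -- telescoping
  have htel : c v - c u = ∑ t ∈ Finset.range (v - u), (c (u + t + 1) - c (u + t)) := by
    have h0 := Finset.sum_range_sub (fun i => c (u + i)) (v - u)
    simp only [← Nat.add_assoc, Nat.add_sub_of_le (le_of_lt huv : u ≤ v), Nat.add_zero] at h0
    exact h0.symm
  have hsum_bound : ∑ t ∈ Finset.range (v - u), (η (u + t) * c (u + t) ^ 2) < ε ^ 2 / (4 * M) := by
    have h1 : ∑ t ∈ Finset.range (v - u), (η (u + t) * c (u + t) ^ 2)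
        = S v - S u := by
      rw [← Finset.sum_Ico_eq_sum_range (f := fun t => η t * c t ^ 2) (m := u) (n := v)]
      exact Finset.sum_Ico_eq_sub _ (le_of_lt huv)
    have h2 : S N ≤ S u := by
      apply Finset.sum_le_sum_of_subset_of_nonneg (Finset.range_subset_range.mpr huN)
      intro i _ _
      have := hη_nonneg i
      have := sq_nonneg (c i)
      positivity
    have h3 := hN v (le_trans huN (le_of_lt huv))
    rw [Real.dist_eq] at h3
    have h4 : S v - S N ≤ |S v - S N| := le_abs_self _
    linarith
  -- step bounds
  have hstep : ∀ t ∈ Finset.range (v - u),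
      c (u + t) - c (u + t + 1) ≤ (2 * M / ε) * (η (u + t) * c (u + t) ^ 2) := by
    intro t ht
    rw [Finset.mem_range] at ht
    have hut : u ≤ u + t := Nat.le_add_right _ _
    have htv : u + t < v := by omega
    have hc2 : ε / 2 ≤ c (u + t) := hmid _ hut htv
    have h1 : |c (u + t + 1) - c (u + t)| ≤ M * η (u + t) * c (u + t) := hslow (u + t)
    have h2 : c (u + t) - c (u + t + 1) ≤ M * η (u + t) * c (u + t) := by
      have := neg_abs_le (c (u + t + 1) - c (u + t))
      linarith [abs_le.mp h1]
    have h3 : M * η (u + t) * c (u + t) ≤ (2 * M / ε) * (η (u + t) * c (u + t) ^ 2) := by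
      rw [div_mul_eq_mul_div, le_div_iff₀ hε]
      have hη := hη_nonneg (u + t)
      have h4 : ε ≤ 2 * c (u + t) := by linarith
      have h5 : 0 ≤ M * η (u + t) * c (u + t) :=
        mul_nonneg (mul_nonneg hM.le hη) (hc_nonneg (u + t))
      nlinarith [mul_le_mul_of_nonneg_left h4 h5]
    linarith
  have hchain : c u - c v ≤ (2 * M / ε) * ∑ t ∈ Finset.range (v - u), (η (u + t) * c (u + t) ^ 2) := by
    have h1 : c u - c v = ∑ t ∈ Finset.range (v - u), (c (u + t) - c (u + t + 1)) := by
      have := htel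
      rw [Finset.sum_sub_distrib] at this ⊢
      linarith
    rw [h1, Finset.mul_sum]
    exact Finset.sum_le_sum hstep
  have hfin : (2 * M / ε) * ∑ t ∈ Finset.range (v - u), (η (u + t) * c (u + t) ^ 2)
      < (2 * M / ε) * (ε ^ 2 / (4 * M)) := by
    apply mul_lt_mul_of_pos_left hsum_bound (by positivity)
  have heq : (2 * M / ε) * (ε ^ 2 / (4 * M)) = ε / 2 := by
    field_simp
    ring
  have : ε / 2 < c u - c v := by linarith
  linarith
end

section
/- Let F : ℝ^d → ℝ be differentiable with L-Lipschitz gradient (L > 0) and F ≥ 0. Let α₀ > 0, β > 0, and let (x_t) be a sequence with x_{t+1} = x_t + η_t·d_t, where ⟨∇F(x_t), d_t⟩ ≤ −α₀·‖∇F(x_t)‖² and ‖d_t‖ ≤ β·‖∇F(x_t)‖ for all t, and η_t = η₀/(1+t)^α with η₀ > 0 and 1/2 < α ≤ 1. Then ‖∇F(x_t)‖ → 0 as t → ∞. -/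
set_option maxHeartbeats 1000000

open Filter RealInnerProductSpace

section Aux

variable {E : Type*} [NormedAddCommGroup E] [InnerProductSpace ℝ E] [CompleteSpace E]

/-- Descent-type inequality for a function with Lipschitz gradient (with constant `L`
instead of the sharp `L/2`). -/
lemma aicl_descent (F : E → ℝ) (L : ℝ) (hL : 0 < L) (hF : Differentiable ℝ F)
    (hLip : ∀ x y, ‖gradient F x - gradient F y‖ ≤ L * ‖x - y‖) (x y : E) :
    F y ≤ F x + ⟪gradient F x, y - x⟫ + L * ‖y - x‖ ^ 2 := by
  have hfd : ∀ z : E, fderiv ℝ F z = InnerProductSpace.toDual ℝ E (gradient F z) := by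
    intro z
    rw [gradient, LinearIsometryEquiv.apply_symm_apply]
  have hnormfd : ∀ z w : E, ‖fderiv ℝ F z - fderiv ℝ F w‖ = ‖gradient F z - gradient F w‖ := by
    intro z w
    rw [hfd, hfd, ← map_sub, LinearIsometryEquiv.norm_map]
  have hseg : ∀ z ∈ segment ℝ x y, ‖z - x‖ ≤ ‖y - x‖ := by
    rintro z ⟨a, b, ha, hb, hab, rfl⟩
    have hz : a • x + b • y - x = b • (y - x) := by
      have ha' : a = 1 - b := by linarith
      subst ha'
      module
    rw [hz, norm_smul, Real.norm_eq_abs, abs_of_nonneg hb]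
    nlinarith [norm_nonneg (y - x)]
  have key := (convex_segment x y).norm_image_sub_le_of_norm_hasFDerivWithin_le'
    (f := F) (f' := fun z => fderiv ℝ F z) (φ := fderiv ℝ F x)
    (C := L * ‖y - x‖)
    (fun z _ => (hF z).hasFDerivAt.hasFDerivWithinAt)
    (fun z hz => by
      rw [hnormfd]
      calc ‖gradient F z - gradient F x‖ ≤ L * ‖z - x‖ := hLip z x
        _ ≤ L * ‖y - x‖ := by nlinarith [hseg z hz])
    (left_mem_segment ℝ x y) (right_mem_segment ℝ x y)
  have happ : (fderiv ℝ F x) (y - x) = ⟪gradient F x, y - x⟫ := by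
    rw [hfd]; rfl
  rw [happ] at key
  have habs := abs_le.1 (by simpa only [Real.norm_eq_abs] using key)
  nlinarith [habs.2]

end Aux

/-- Lemma 5 of the AICL convergence analysis: with `F ≥ 0` differentiable
with `L`-Lipschitz gradient, gradient-related attack directions
(`⟪∇F xₜ, dₜ⟫ ≤ -α₀·‖∇F xₜ‖²`, `‖dₜ‖ ≤ β·‖∇F xₜ‖`), and step sizes
`η t = η₀/(1+t)^α` with `η₀ > 0`, `1/2 < α ≤ 1`, the gradient norms along
the AICL iterates vanish: `‖∇F (x t)‖ → 0`. -/
theorem aicl_gradient_norm_tendsto_zero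
    (dim : ℕ) (F : EuclideanSpace ℝ (Fin dim) → ℝ) (L α₀ β η₀ α : ℝ)
    (hL : 0 < L) (hα₀ : 0 < α₀) (hβ : 0 < β)
    (hη₀ : 0 < η₀) (hα₁ : 1 / 2 < α) (hα₂ : α ≤ 1)
    (hF : Differentiable ℝ F) (hF_nonneg : ∀ x, 0 ≤ F x)
    (hLip : ∀ x y, ‖gradient F x - gradient F y‖ ≤ L * ‖x - y‖)
    (x : ℕ → EuclideanSpace ℝ (Fin dim))
    (dvec : ℕ → EuclideanSpace ℝ (Fin dim)) (η : ℕ → ℝ)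
    (hη : ∀ t : ℕ, η t = η₀ / ((1 : ℝ) + t) ^ α)
    (hstep : ∀ t, x (t + 1) = x t + η t • dvec t)
    (hcorr : ∀ t, ⟪gradient F (x t), dvec t⟫ ≤ -α₀ * ‖gradient F (x t)‖ ^ 2)
    (hnorm : ∀ t, ‖dvec t‖ ≤ β * ‖gradient F (x t)‖) :
    Tendsto (fun t => ‖gradient F (x t)‖) atTop (nhds 0) := by
  set g : ℕ → ℝ := fun t => ‖gradient F (x t)‖ with hg
  have hg_nonneg : ∀ t, 0 ≤ g t := fun t => norm_nonneg _
  have hαpos : 0 < α := by linarith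
  -- basic facts about η
  have hbase : ∀ t : ℕ, (1:ℝ) ≤ ((1:ℝ) + t) := fun t =>
    le_add_of_nonneg_right (Nat.cast_nonneg t)
  have hrpow_pos : ∀ t : ℕ, (0:ℝ) < ((1:ℝ) + t) ^ α := fun t =>
    Real.rpow_pos_of_pos (lt_of_lt_of_le one_pos (hbase t)) α
  have hηpos : ∀ t, 0 < η t := fun t => by
    rw [hη]; exact div_pos hη₀ (hrpow_pos t)
  have hrpow_one_le : ∀ t : ℕ, (1:ℝ) ≤ ((1:ℝ) + t) ^ α := fun t => by
    calc (1:ℝ) = (1:ℝ) ^ α := (Real.one_rpow α).symm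
      _ ≤ ((1:ℝ) + t) ^ α := Real.rpow_le_rpow zero_le_one (hbase t) hαpos.le
  have hη_le : ∀ t, η t ≤ η₀ := fun t => by
    rw [hη]
    calc η₀ / ((1:ℝ) + t) ^ α ≤ η₀ / 1 :=
          div_le_div_of_nonneg_left hη₀.le one_pos (hrpow_one_le t)
      _ = η₀ := div_one η₀
  -- η tends to 0
  have hη_tendsto : Tendsto η atTop (nhds 0) := by
    have h1 : Tendsto (fun t : ℕ => ((1:ℝ) + t)) atTop atTop :=
      tendsto_atTop_add_const_left atTop 1 tendsto_natCast_atTop_atTop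
    have h2 : Tendsto (fun t : ℕ => ((1:ℝ) + t) ^ α) atTop atTop :=
      (tendsto_rpow_atTop hαpos).comp h1
    have h3 : Tendsto (fun t : ℕ => η₀ / ((1:ℝ) + t) ^ α) atTop (nhds 0) :=
      Tendsto.div_atTop tendsto_const_nhds h2
    exact h3.congr (fun t => (hη t).symm)
  -- η is not summable
  have hη_not_summable : ¬ Summable η := by
    intro hsum
    have hle : ∀ t : ℕ, η₀ * (1 / ((t:ℝ) + 1)) ≤ η t := by
      intro t
      rw [hη]
      have h1 : ((1:ℝ) + t) ^ α ≤ (1:ℝ) + t := by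
        calc ((1:ℝ) + t) ^ α ≤ ((1:ℝ) + t) ^ (1:ℝ) :=
              Real.rpow_le_rpow_of_exponent_le (hbase t) hα₂
          _ = (1:ℝ) + t := Real.rpow_one _
      rw [mul_one_div, div_le_div_iff₀ (by positivity) (hrpow_pos t)]
      nlinarith [hrpow_pos t]
    have hs2 : Summable (fun t : ℕ => η₀ * (1 / ((t:ℝ) + 1))) :=
      Summable.of_nonneg_of_le (fun t => by positivity) hle hsum
    have hs3 : Summable (fun t : ℕ => 1 / ((t:ℝ) + 1)) := by
      refine (hs2.mul_left η₀⁻¹).congr fun t => ?_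
      rw [← mul_assoc, inv_mul_cancel₀ hη₀.ne', one_mul]
    have hs4 : Summable (fun n : ℕ => 1 / (((n + 1 : ℕ)):ℝ)) :=
      hs3.congr (fun n => by push_cast; ring)
    exact Real.not_summable_one_div_natCast
      ((summable_nat_add_iff (f := fun n : ℕ => 1 / (n:ℝ)) 1).1 hs4)
  -- key descent inequality
  have hdescent : ∀ t, F (x (t + 1)) ≤ F (x t) - α₀ * η t * g t ^ 2
      + L * β ^ 2 * η t ^ 2 * g t ^ 2 := by
    intro t
    have hd := aicl_descent F L hL hF hLip (x t) (x (t + 1))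
    rw [hstep t] at hd ⊢
    have hdiff : x t + η t • dvec t - x t = η t • dvec t := by abel
    rw [hdiff] at hd
    have hinner : ⟪gradient F (x t), η t • dvec t⟫ = η t * ⟪gradient F (x t), dvec t⟫ :=
      real_inner_smul_right _ _ _
    have hnrm : ‖η t • dvec t‖ = η t * ‖dvec t‖ := by
      rw [norm_smul, Real.norm_eq_abs, abs_of_pos (hηpos t)]
    have h1 : η t * ⟪gradient F (x t), dvec t⟫ ≤ -α₀ * η t * g t ^ 2 := by
      have := mul_le_mul_of_nonneg_left (hcorr t) (hηpos t).le
      nlinarith [this]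
    have hd2 : ‖dvec t‖ ^ 2 ≤ β ^ 2 * g t ^ 2 := by
      nlinarith [hnorm t, norm_nonneg (dvec t), hg_nonneg t]
    have h2 : L * ‖η t • dvec t‖ ^ 2 ≤ L * β ^ 2 * η t ^ 2 * g t ^ 2 := by
      rw [hnrm]
      calc L * (η t * ‖dvec t‖) ^ 2 = L * η t ^ 2 * ‖dvec t‖ ^ 2 := by ring
        _ ≤ L * η t ^ 2 * (β ^ 2 * g t ^ 2) :=
            mul_le_mul_of_nonneg_left hd2 (by positivity)
        _ = L * β ^ 2 * η t ^ 2 * g t ^ 2 := by ring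
    calc F (x t + η t • dvec t)
        ≤ F (x t) + ⟪gradient F (x t), η t • dvec t⟫ + L * ‖η t • dvec t‖ ^ 2 := hd
      _ ≤ F (x t) - α₀ * η t * g t ^ 2 + L * β ^ 2 * η t ^ 2 * g t ^ 2 := by
          rw [hinner]; linarith [h1, h2]
  -- eventually η t is small enough for strict descent
  obtain ⟨T, hT⟩ : ∃ T : ℕ, ∀ t ≥ T, η t ≤ α₀ / (2 * L * β ^ 2) := by
    have hpos : (0:ℝ) < α₀ / (2 * L * β ^ 2) := by positivity
    exact eventually_atTop.1 (hη_tendsto.eventually (eventually_le_nhds hpos))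
  have hdescent2 : ∀ t ≥ T, (α₀ / 2) * (η t * g t ^ 2) ≤ F (x t) - F (x (t + 1)) := by
    intro t ht
    have h1 := hdescent t
    have h3 : η t ≤ α₀ / (2 * L * β ^ 2) := hT t ht
    rw [le_div_iff₀ (by positivity : (0:ℝ) < 2 * L * β ^ 2)] at h3
    have h4 : L * β ^ 2 * η t ≤ α₀ / 2 := by linarith
    have h2 : L * β ^ 2 * η t ^ 2 * g t ^ 2 ≤ (α₀ / 2) * (η t * g t ^ 2) := by
      nlinarith [mul_le_mul_of_nonneg_right h4
        (mul_nonneg (hηpos t).le (sq_nonneg (g t)))]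
    linarith
  -- summability of η t * g t ^ 2
  have hu_nonneg : ∀ t, 0 ≤ η t * g t ^ 2 := fun t =>
    mul_nonneg (hηpos t).le (sq_nonneg _)
  have hsum_u : Summable (fun t => η t * g t ^ 2) := by
    rw [← summable_nat_add_iff T]
    apply summable_of_sum_range_le (c := (2 / α₀) * F (x T)) (fun n => hu_nonneg (n + T))
    intro n
    have htel : ∑ i ∈ Finset.range n, (F (x (T + i)) - F (x (T + i + 1)))
        = F (x T) - F (x (T + n)) := by
      have h := Finset.sum_range_sub' (fun i => F (x (T + i))) n
      simpa [add_assoc] using h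
    have hbound : ∑ i ∈ Finset.range n, (η (i + T) * g (i + T) ^ 2)
        ≤ (2 / α₀) * ∑ i ∈ Finset.range n, (F (x (T + i)) - F (x (T + i + 1))) := by
      rw [Finset.mul_sum]
      apply Finset.sum_le_sum
      intro i _
      have hi := hdescent2 (T + i) (Nat.le_add_right T i)
      have heq : i + T = T + i := Nat.add_comm i T
      rw [heq, div_mul_eq_mul_div, le_div_iff₀ hα₀]
      nlinarith [hi]
    have hfn := hF_nonneg (x (T + n))
    have hc : (0:ℝ) ≤ 2 / α₀ := by positivity
    calc ∑ i ∈ Finset.range n, (η (i + T) * g (i + T) ^ 2)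
        ≤ (2 / α₀) * (F (x T) - F (x (T + n))) := by rw [← htel]; exact hbound
      _ ≤ (2 / α₀) * F (x T) :=
          mul_le_mul_of_nonneg_left (by linarith) hc
  -- gradient norm growth control : g (t+1) ≤ g t + L * β * η t * g t
  have hgrow : ∀ t, g (t + 1) ≤ g t + L * β * η t * g t := by
    intro t
    have h1 : ‖gradient F (x (t + 1)) - gradient F (x t)‖ ≤ L * ‖x (t + 1) - x t‖ :=
      hLip _ _
    have h2 : x (t + 1) - x t = η t • dvec t := by rw [hstep t]; abel
    have h3 : ‖x (t + 1) - x t‖ = η t * ‖dvec t‖ := by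
      rw [h2, norm_smul, Real.norm_eq_abs, abs_of_pos (hηpos t)]
    have h4 : g (t + 1) ≤ g t + ‖gradient F (x (t + 1)) - gradient F (x t)‖ := by
      have := norm_sub_norm_le (gradient F (x (t + 1))) (gradient F (x t))
      simp only [hg]
      linarith [this]
    have h5 : ‖gradient F (x (t+1)) - gradient F (x t)‖ ≤ L * β * η t * g t := by
      calc ‖gradient F (x (t+1)) - gradient F (x t)‖ ≤ L * ‖x (t + 1) - x t‖ := h1
        _ = L * (η t * ‖dvec t‖) := by rw [h3]
        _ ≤ L * β * η t * g t := by
            nlinarith [mul_le_mul_of_nonneg_left (hnorm t) (mul_pos hL (hηpos t)).le]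
    linarith
  -- quadratic recursion for V = g^2
  set Cb : ℝ := 2 * L * β + L ^ 2 * β ^ 2 * η₀ with hCb
  have hCb_pos : 0 < Cb := by positivity
  set V : ℕ → ℝ := fun t => g t ^ 2 with hV
  set b : ℕ → ℝ := fun t => Cb * (η t * V t) with hb
  have hb_nonneg : ∀ t, 0 ≤ b t := fun t =>
    mul_nonneg hCb_pos.le (mul_nonneg (hηpos t).le (sq_nonneg _))
  have hV_rec : ∀ t, V (t + 1) ≤ V t + b t := by
    intro t
    have h1 := hgrow t
    have hpos1 : 0 ≤ g t + L * β * η t * g t := by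
      have := mul_nonneg (mul_nonneg (mul_pos hL hβ).le (hηpos t).le) (hg_nonneg t)
      linarith [hg_nonneg t]
    have h2 : g (t + 1) ^ 2 ≤ (g t + L * β * η t * g t) ^ 2 :=
      sq_le_sq' (by linarith [hg_nonneg (t + 1)]) h1
    have hη2 : η t ^ 2 ≤ η₀ * η t := by nlinarith [hη_le t, hηpos t]
    have h4 : (g t + L * β * η t * g t) ^ 2 ≤ g t ^ 2 + Cb * (η t * g t ^ 2) := by
      simp only [hCb]
      nlinarith [mul_le_mul_of_nonneg_left hη2
        (by positivity : (0:ℝ) ≤ L ^ 2 * β ^ 2 * g t ^ 2)]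
    show g (t + 1) ^ 2 ≤ g t ^ 2 + Cb * (η t * g t ^ 2)
    linarith
  have hsum_b : Summable b := hsum_u.mul_left Cb
  -- V converges
  have hP : Tendsto (fun n => ∑ i ∈ Finset.range n, b i) atTop (nhds (∑' i, b i)) :=
    hsum_b.hasSum.tendsto_sum_nat
  set W : ℕ → ℝ := fun t => V t - ∑ i ∈ Finset.range t, b i with hW
  have hW_anti : Antitone W := by
    apply antitone_nat_of_succ_le
    intro n
    have hr := hV_rec n
    simp only [hW, Finset.sum_range_succ]
    linarith
  have hW_bdd : BddBelow (Set.range W) := by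
    refine ⟨-∑' i, b i, ?_⟩
    rintro _ ⟨t, rfl⟩
    have h1 : ∑ i ∈ Finset.range t, b i ≤ ∑' i, b i :=
      Summable.sum_le_tsum _ (fun i _ => hb_nonneg i) hsum_b
    have h2 : 0 ≤ V t := sq_nonneg _
    simp only [hW]
    linarith
  have hW_tendsto : Tendsto W atTop (nhds (⨅ t, W t)) := tendsto_atTop_ciInf hW_anti hW_bdd
  have hV_tendsto : Tendsto V atTop (nhds ((⨅ t, W t) + ∑' i, b i)) := by
    have hVeq : V = fun t => W t + ∑ i ∈ Finset.range t, b i := by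
      funext t; simp only [hW]; ring
    rw [hVeq]
    exact hW_tendsto.add hP
  set ℓ : ℝ := (⨅ t, W t) + ∑' i, b i with hℓ
  have hℓ_nonneg : 0 ≤ ℓ := ge_of_tendsto' hV_tendsto (fun t => sq_nonneg (g t))
  -- ℓ = 0
  have hℓ_zero : ℓ = 0 := by
    by_contra hne
    have hℓpos : 0 < ℓ := lt_of_le_of_ne hℓ_nonneg (Ne.symm hne)
    obtain ⟨T₁, hT₁⟩ := eventually_atTop.1
      (hV_tendsto.eventually (eventually_ge_nhds (show ℓ / 2 < ℓ by linarith)))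
    apply hη_not_summable
    rw [← summable_nat_add_iff T₁]
    refine Summable.of_nonneg_of_le (f := fun n => (2 / ℓ) * (η (n + T₁) * V (n + T₁)))
      (fun n => (hηpos (n + T₁)).le) (fun n => ?_) ?_
    · show η (n + T₁) ≤ (2 / ℓ) * (η (n + T₁) * V (n + T₁))
      have h1 : ℓ / 2 ≤ V (n + T₁) := hT₁ (n + T₁) (Nat.le_add_left T₁ n)
      have h2 := hηpos (n + T₁)
      have h3 : (0:ℝ) ≤ 2 / ℓ * η (n + T₁) := by positivity
      calc η (n + T₁) = (2 / ℓ * η (n + T₁)) * (ℓ / 2) := by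
            field_simp
        _ ≤ (2 / ℓ * η (n + T₁)) * V (n + T₁) := mul_le_mul_of_nonneg_left h1 h3
        _ = 2 / ℓ * (η (n + T₁) * V (n + T₁)) := by ring
    · have hs := hsum_u.mul_left (2 / ℓ)
      rw [← summable_nat_add_iff T₁] at hs
      exact hs
  -- conclude
  rw [hℓ_zero] at hV_tendsto
  have hsqrt : Tendsto (fun t => Real.sqrt (V t)) atTop (nhds 0) := by
    have h := hV_tendsto.sqrt
    rwa [Real.sqrt_zero] at h
  apply hsqrt.congr
  intro t
  exact Real.sqrt_sq (norm_nonneg _)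
end

section
/- Let F : ℝ^d → ℝ be differentiable with L-Lipschitz gradient (L > 0) and F ≥ 0, let α₀ > 0 and β > 0, and let (x_t) be a sequence with x_{t+1} = x_t + η_t·d_t, where the directions satisfy ⟨∇F(x_t), d_t⟩ ≤ −α₀·‖∇F(x_t)‖² and ‖d_t‖ ≤ β·‖∇F(x_t)‖ for all t, and the step sizes are η_t = η₀/(1+t)^α with η₀ > 0 and 1/2 < α ≤ 1. Then ‖x_{t+1} − x_t‖ → 0 and ‖∇F(x_t)‖ → 0 as t → ∞; that is, the AICL iterations converge in the sense of the Main Convergence Theorem. -/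
open Filter RealInnerProductSpace

lemma descent_lemma {E : Type*} [NormedAddCommGroup E] [InnerProductSpace ℝ E] [CompleteSpace E]
    (F : E → ℝ) (L : ℝ) (hF : Differentiable ℝ F)
    (hLip : ∀ a b, ‖gradient F a - gradient F b‖ ≤ L * ‖a - b‖)
    (p v : E) :
    F (p + v) ≤ F p + ⟪gradient F p, v⟫ + L / 2 * ‖v‖ ^ 2 := by
  set c : ℝ := ⟪gradient F p, v⟫ with hc
  have hφ : ∀ s : ℝ, HasDerivAt (fun s : ℝ => F (p + s • v))
      (⟪gradient F (p + s • v), v⟫) s := by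
    intro s
    have hline : HasDerivAt (fun s : ℝ => p + s • v) v s := by
      simpa using ((hasDerivAt_id s).smul_const v).const_add p
    have hg := (hF (p + s • v)).hasGradientAt.hasFDerivAt
    have := hg.comp_hasDerivAt s hline
    rw [Function.comp_def] at this
    simpa using this
  set ψ : ℝ → ℝ := fun s => F (p + s • v) - s * c - L / 2 * ‖v‖ ^ 2 * s ^ 2 with hψ
  have hψd : ∀ s : ℝ, HasDerivAt ψ
      (⟪gradient F (p + s • v), v⟫ - c - L / 2 * ‖v‖ ^ 2 * (2 * s)) s := by
    intro s
    have h1 : HasDerivAt (fun s : ℝ => s * c) c s := by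
      simpa using (hasDerivAt_id s).mul_const c
    have h2 : HasDerivAt (fun s : ℝ => L / 2 * ‖v‖ ^ 2 * s ^ 2)
        (L / 2 * ‖v‖ ^ 2 * (2 * s)) s := by
      have := (hasDerivAt_pow 2 s).const_mul (L / 2 * ‖v‖ ^ 2)
      simpa [mul_comm, mul_assoc, mul_left_comm] using this
    exact ((hφ s).sub h1).sub h2
  have hmono : AntitoneOn ψ (Set.Icc (0:ℝ) 1) := by
    apply antitoneOn_of_deriv_nonpos (convex_Icc 0 1)
    · exact (Differentiable.continuous (fun s => (hψd s).differentiableAt)).continuousOn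
    · intro s _
      exact (hψd s).differentiableAt.differentiableWithinAt
    · intro s hs
      rw [interior_Icc] at hs
      rw [(hψd s).deriv]
      have hs0 : (0:ℝ) ≤ s := le_of_lt hs.1
      have h1 : ⟪gradient F (p + s • v), v⟫ - c ≤ L * s * ‖v‖ ^ 2 := by
        have : ⟪gradient F (p + s • v), v⟫ - c =
            ⟪gradient F (p + s • v) - gradient F p, v⟫ := by
          rw [inner_sub_left]
        rw [this]
        calc ⟪gradient F (p + s • v) - gradient F p, v⟫
            ≤ ‖gradient F (p + s • v) - gradient F p‖ * ‖v‖ := real_inner_le_norm _ _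
          _ ≤ (L * ‖p + s • v - p‖) * ‖v‖ := by
              apply mul_le_mul_of_nonneg_right (hLip _ _) (norm_nonneg v)
          _ = L * s * ‖v‖ ^ 2 := by
              have : ‖p + s • v - p‖ = s * ‖v‖ := by
                simp [norm_smul, abs_of_nonneg hs0]
              rw [this]; ring
      nlinarith [sq_nonneg (‖v‖), sq_nonneg s]
  have h01 : ψ 1 ≤ ψ 0 :=
    hmono (Set.mem_Icc.2 ⟨le_refl 0, zero_le_one⟩) (Set.mem_Icc.2 ⟨zero_le_one, le_refl 1⟩)
      zero_le_one
  simp only [hψ] at h01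
  simp only [one_smul, zero_smul, add_zero] at h01
  nlinarith [h01]

set_option maxHeartbeats 1000000 in
/-- Main Convergence Theorem of the AICL analysis: for a nonnegative loss `F`
with `L`-Lipschitz gradient (A3), gradient-related attack directions
(`⟪∇F xₜ, dₜ⟫ ≤ -α₀·‖∇F xₜ‖²` and `‖dₜ‖ ≤ β·‖∇F xₜ‖`, A4), and step sizes
`η t = η₀/(1+t)^α` with `η₀ > 0`, `1/2 < α ≤ 1` (A5), the AICL iterations
converge: `‖x (t+1) - x t‖ → 0` and `‖∇F (x t)‖ → 0`. -/
theorem aicl_main_convergence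
    (dim : ℕ) (F : EuclideanSpace ℝ (Fin dim) → ℝ) (L α₀ β η₀ α : ℝ)
    (hL : 0 < L) (hα₀ : 0 < α₀) (hβ : 0 < β)
    (hη₀ : 0 < η₀) (hα₁ : 1 / 2 < α) (hα₂ : α ≤ 1)
    (hF : Differentiable ℝ F) (hF_nonneg : ∀ x, 0 ≤ F x)
    (hLip : ∀ x y, ‖gradient F x - gradient F y‖ ≤ L * ‖x - y‖)
    (x : ℕ → EuclideanSpace ℝ (Fin dim))
    (dvec : ℕ → EuclideanSpace ℝ (Fin dim)) (η : ℕ → ℝ)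
    (hη : ∀ t : ℕ, η t = η₀ / ((1 : ℝ) + t) ^ α)
    (hstep : ∀ t, x (t + 1) = x t + η t • dvec t)
    (hcorr : ∀ t, ⟪gradient F (x t), dvec t⟫ ≤ -α₀ * ‖gradient F (x t)‖ ^ 2)
    (hnorm : ∀ t, ‖dvec t‖ ≤ β * ‖gradient F (x t)‖) :
    Tendsto (fun t => ‖x (t + 1) - x t‖) atTop (nhds 0) ∧
      Tendsto (fun t => ‖gradient F (x t)‖) atTop (nhds 0) := by
  set g : ℕ → ℝ := fun t => ‖gradient F (x t)‖ with hg
  have hgnn : ∀ t, 0 ≤ g t := fun t => norm_nonneg _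
  -- basic properties of η
  have hbase : ∀ t : ℕ, (1 : ℝ) ≤ 1 + t := fun t => by
    have := Nat.cast_nonneg (α := ℝ) t; linarith
  have hηpos : ∀ t, 0 < η t := by
    intro t; rw [hη t]
    exact div_pos hη₀ (Real.rpow_pos_of_pos (by positivity) α)
  have hηle : ∀ t, η t ≤ η₀ := by
    intro t; rw [hη t]
    apply div_le_self hη₀.le
    exact Real.one_le_rpow (hbase t) (by linarith)
  have hηlim : Tendsto η atTop (nhds 0) := by
    have h1 : Tendsto (fun t : ℕ => ((1 : ℝ) + t) ^ α) atTop atTop := by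
      apply (tendsto_rpow_atTop (by linarith : (0:ℝ) < α)).comp
      exact tendsto_atTop_add_const_left _ 1 tendsto_natCast_atTop_atTop
    have := Tendsto.div_atTop (tendsto_const_nhds : Tendsto (fun _ : ℕ => η₀) atTop (nhds η₀)) h1
    simpa [← hη] using this.congr (fun t => (hη t).symm)
  have hηns : ¬ Summable η := by
    intro hs
    have hle : ∀ t : ℕ, 1 / ((t : ℝ) + 1) ≤ η t / η₀ := by
      intro t
      rw [hη t, div_right_comm, div_self hη₀.ne']
      apply one_div_le_one_div_of_le (by positivity)
      calc ((1:ℝ) + t) ^ α ≤ ((1:ℝ) + t) ^ (1:ℝ) :=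
            Real.rpow_le_rpow_of_exponent_le (hbase t) hα₂
        _ = (t:ℝ) + 1 := by rw [Real.rpow_one]; ring
    have hs2 : Summable (fun t : ℕ => 1 / ((t : ℝ) + 1)) := by
      apply Summable.of_nonneg_of_le (fun t => by positivity) hle
      exact hs.div_const η₀
    apply Real.not_summable_one_div_natCast
    apply (summable_nat_add_iff (f := fun n : ℕ => 1 / (n : ℝ)) 1).mp
    convert hs2 using 2 with n
    all_goals (push_cast; rfl)
  -- descent inequality
  have hdesc : ∀ t, F (x (t + 1)) ≤ F (x t) - α₀ * η t * g t ^ 2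
      + L / 2 * β ^ 2 * η t ^ 2 * g t ^ 2 := by
    intro t
    have h1 := descent_lemma F L hF hLip (x t) (η t • dvec t)
    rw [← hstep t] at h1
    have h2 : ⟪gradient F (x t), η t • dvec t⟫ ≤ η t * (-α₀ * g t ^ 2) := by
      rw [real_inner_smul_right]
      exact mul_le_mul_of_nonneg_left (hcorr t) (hηpos t).le
    have h3 : ‖η t • dvec t‖ ^ 2 ≤ η t ^ 2 * (β ^ 2 * g t ^ 2) := by
      rw [norm_smul]
      have h4 : ‖dvec t‖ ^ 2 ≤ β ^ 2 * g t ^ 2 := by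
        nlinarith [hnorm t, norm_nonneg (dvec t), hgnn t]
      have : (‖(η t : ℝ)‖) ^ 2 = η t ^ 2 := by
        rw [Real.norm_eq_abs, sq_abs]
      nlinarith [sq_nonneg (η t), norm_nonneg (dvec t), sq_abs (η t),
        abs_nonneg (η t)]
    nlinarith [h1, h2, h3, hL]
  -- eventually strict decrease
  obtain ⟨T, hT⟩ : ∃ T : ℕ, ∀ t ≥ T, η t ≤ α₀ / (L * β ^ 2) := by
    have hpos : (0:ℝ) < α₀ / (L * β ^ 2) := by positivity
    have hev : ∀ᶠ t in atTop, η t < α₀ / (L * β ^ 2) :=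
      hηlim.eventually_lt_const hpos
    rw [eventually_atTop] at hev
    obtain ⟨T, hT⟩ := hev
    exact ⟨T, fun t ht => (hT t ht).le⟩
  -- strict decrease from T on
  set s : ℕ → ℝ := fun t => η t * g t ^ 2 with hsdef
  have hsnn : ∀ t, 0 ≤ s t := fun t => mul_nonneg (hηpos t).le (sq_nonneg _)
  have hdec : ∀ t ≥ T, α₀ / 2 * s t ≤ F (x t) - F (x (t + 1)) := by
    intro t ht
    have h1 := hdesc t
    have h2 := hT t ht
    have h3 : L / 2 * β ^ 2 * η t ^ 2 * g t ^ 2 ≤ α₀ / 2 * (η t * g t ^ 2) := by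
      have h4 : L * β ^ 2 * η t ≤ α₀ := by
        rw [le_div_iff₀ (by positivity : (0:ℝ) < L * β ^ 2)] at h2
        nlinarith
      nlinarith [sq_nonneg (g t), (hηpos t).le, mul_nonneg (hηpos t).le (sq_nonneg (g t))]
    simp only [hsdef]
    nlinarith
  -- summability of s
  have hssum : Summable s := by
    rw [← summable_nat_add_iff T]
    apply summable_of_sum_range_le (fun n => hsnn _)
    intro n
    have htel : ∑ i ∈ Finset.range n, (F (x (i + T)) - F (x (i + 1 + T)))
        = F (x T) - F (x (n + T)) := by
      have := Finset.sum_range_sub' (fun i => F (x (i + T))) n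
      simpa using this
    have hb : ∑ i ∈ Finset.range n, α₀ / 2 * s (i + T) ≤ F (x T) := by
      calc ∑ i ∈ Finset.range n, α₀ / 2 * s (i + T)
          ≤ ∑ i ∈ Finset.range n, (F (x (i + T)) - F (x (i + 1 + T))) := by
            apply Finset.sum_le_sum
            intro i _
            have := hdec (i + T) (Nat.le_add_left T i)
            rwa [Nat.add_right_comm i T 1] at this
        _ = F (x T) - F (x (n + T)) := htel
        _ ≤ F (x T) := by linarith [hF_nonneg (x (n + T))]
    rw [← Finset.mul_sum] at hb
    calc ∑ i ∈ Finset.range n, s (i + T)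
        = 2 / α₀ * (α₀ / 2 * ∑ i ∈ Finset.range n, s (i + T)) := by
          field_simp
      _ ≤ 2 / α₀ * F (x T) :=
          mul_le_mul_of_nonneg_left hb (by positivity)
  -- gradient norm recursion
  set C : ℝ := 2 * L * β + L ^ 2 * β ^ 2 * η₀ with hC
  set a : ℕ → ℝ := fun t => g t ^ 2 with ha
  have hann : ∀ t, 0 ≤ a t := fun t => sq_nonneg _
  have hgrec : ∀ t, g (t + 1) ≤ g t + L * β * η t * g t := by
    intro t
    have h1 : ‖gradient F (x (t + 1)) - gradient F (x t)‖ ≤ L * ‖x (t + 1) - x t‖ :=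
      hLip _ _
    have h2 : ‖x (t + 1) - x t‖ = η t * ‖dvec t‖ := by
      rw [hstep t]
      simp [norm_smul, abs_of_nonneg (hηpos t).le]
    have h3 : g (t + 1) ≤ g t + ‖gradient F (x (t + 1)) - gradient F (x t)‖ := by
      simp only [hg]
      have := norm_sub_norm_le (gradient F (x (t + 1))) (gradient F (x t))
      linarith [abs_le.mp (abs_norm_sub_norm_le (gradient F (x (t + 1))) (gradient F (x t)))]
    have h4 := hnorm t
    have h5 : ‖gradient F (x (t + 1)) - gradient F (x t)‖ ≤ L * β * η t * g t := by
      calc ‖gradient F (x (t + 1)) - gradient F (x t)‖ ≤ L * (η t * ‖dvec t‖) := by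
            rw [← h2]; exact h1
        _ ≤ L * β * η t * g t := by
            have := mul_le_mul_of_nonneg_left h4 (hηpos t).le
            nlinarith [hL.le, (hηpos t).le]
    linarith
  have harec : ∀ t, a (t + 1) - a t ≤ C * s t := by
    intro t
    have h1 := hgrec t
    have h2 := hgnn t
    have h3 := hgnn (t + 1)
    have h4 := hηpos t
    have h5 := hηle t
    simp only [ha, hsdef, hC]
    have h6 : g (t + 1) ^ 2 ≤ (g t + L * β * η t * g t) ^ 2 := by
      have hrhs : 0 ≤ g t + L * β * η t * g t := by positivity
      nlinarith [h1, h3]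
    have h7 : 0 ≤ L ^ 2 * β ^ 2 * g t ^ 2 * (η t * (η₀ - η t)) := by
      have : 0 ≤ η₀ - η t := by linarith
      positivity
    nlinarith [h6, h7]
  -- a converges
  set S : ℝ := ∑' t, s t with hS
  have hpart : ∀ n, ∑ i ∈ Finset.range n, s i ≤ S :=
    fun n => Summable.sum_le_tsum (Finset.range n) (fun i _ => hsnn i) hssum
  set b : ℕ → ℝ := fun t => a t - C * ∑ i ∈ Finset.range t, s i with hb
  have hCpos : 0 < C := by
    simp only [hC]; positivity
  have hbanti : Antitone b := by
    apply antitone_nat_of_succ_le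
    intro t
    simp only [hb, Finset.sum_range_succ]
    have := harec t
    nlinarith
  have hbbdd : BddBelow (Set.range b) := by
    refine ⟨-(C * S), ?_⟩
    rintro _ ⟨t, rfl⟩
    simp only [hb]
    have h1 := hann t
    have h2 := hpart t
    nlinarith
  have hblim : Tendsto b atTop (nhds (⨅ t, b t)) := tendsto_atTop_ciInf hbanti hbbdd
  have hsum_lim : Tendsto (fun t => ∑ i ∈ Finset.range t, s i) atTop (nhds S) :=
    hssum.hasSum.tendsto_sum_nat
  have halim : Tendsto a atTop (nhds ((⨅ t, b t) + C * S)) := by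
    have := hblim.add ((hsum_lim.const_mul C))
    apply this.congr
    intro t
    simp only [hb]; ring
  set ℓ : ℝ := (⨅ t, b t) + C * S with hℓ
  have hℓnn : 0 ≤ ℓ := le_of_tendsto_of_tendsto' tendsto_const_nhds halim hann
  have hℓ0 : ℓ = 0 := by
    by_contra hne
    have hℓpos : 0 < ℓ := lt_of_le_of_ne hℓnn (Ne.symm hne)
    have hev : ∀ᶠ t in atTop, ℓ / 2 < a t :=
      halim.eventually_const_lt (by linarith)
    rw [eventually_atTop] at hev
    obtain ⟨T', hT'⟩ := hev
    apply hηns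
    rw [← summable_nat_add_iff T']
    refine Summable.of_nonneg_of_le (f := fun n => 2 / ℓ * s (n + T'))
      (fun n => (hηpos _).le) ?_ ?_
    · intro n
      have h1 := (hT' (n + T') (Nat.le_add_left T' n)).le
      have h2 := hηpos (n + T')
      show η (n + T') ≤ 2 / ℓ * s (n + T')
      simp only [hsdef, ha] at h1 ⊢
      rw [div_mul_eq_mul_div, le_div_iff₀ hℓpos]
      calc η (n + T') * ℓ = 2 * (η (n + T') * (ℓ / 2)) := by ring
        _ ≤ 2 * (η (n + T') * g (n + T') ^ 2) := by nlinarith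
        _ = 2 * (η (n + T') * g (n + T') ^ 2) := rfl
    · exact (((summable_nat_add_iff T').mpr hssum).mul_left _)
  rw [hℓ0] at halim
  -- conclude
  have hglim : Tendsto g atTop (nhds 0) := by
    have := halim.sqrt
    rw [Real.sqrt_zero] at this
    apply this.congr
    intro t
    simp only [ha]
    exact Real.sqrt_sq (hgnn t)
  constructor
  · apply squeeze_zero (fun t => norm_nonneg _) (g := fun t => η₀ * β * g t)
    · intro t
      have h2 : ‖x (t + 1) - x t‖ = η t * ‖dvec t‖ := by
        rw [hstep t]
        simp [norm_smul, abs_of_nonneg (hηpos t).le]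
      rw [h2]
      calc η t * ‖dvec t‖ ≤ η₀ * (β * g t) := by
            apply mul_le_mul (hηle t) (hnorm t) (norm_nonneg _) hη₀.le
        _ = η₀ * β * g t := by ring
    · have := hglim.const_mul (η₀ * β)
      simpa using this
  · exact hglim
end
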